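/- Let C and V be partial orders and (φ, ψ) a Galois connection between them (φ(c) ≤ v ⇔ c ≤ ψ(v)); set ♭ = φ∘ψ. Let D ⊆ C be a subset with ψ(v) ∈ D for every v ∈ V. Let Q : V^op ⥤ Type be a presheaf and S a subpresheaf of Q. Then for every v ∈ V and every q ∈ Q(v): (for all c ∈ D with φ(c) ≤ v, the restriction Q(φ(c) ⟶ v)(q) lies in S(φ(c))) if and only if the restriction Q(♭(v) ⟶ v)(q) lies in S(♭(v)). Hence the closure operator induced by any prequantization category containing the proper one coincides with the ♭-closure S̄(v) = { q ∈ Q(v) | Q(♭(v) ⟶ v)(q) ∈ S(♭(v)) }. -/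

import Mathlib

open CategoryTheory Opposite

/-- Let `(φ, ψ)` be a Galois connection between partial orders `C`
and `V` with `♭ = φ ∘ ψ`, and let `D ⊆ C` contain all values of `ψ`. For a presheaf
`Q : Vᵒᵖ ⥤ Type`, a subpresheaf `S` of `Q`, `v ∈ V` and `q ∈ Q(v)`: the restriction
`Q(φ c ⟶ v)(q)` lies in `S(φ c)` for every `c ∈ D` with `φ c ≤ v` if and only if the
restriction `Q(♭(v) ⟶ v)(q)` lies in `S(♭(v))`. Hence the closure operator induced by
any prequantization category containing the proper one coincides with the `♭`-closure. -/
theorem closure_eq_flatClosure_of_galoisConnection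
    {C V : Type*} [PartialOrder C] [PartialOrder V]
    {φ : C → V} {ψ : V → C} (gc : GaloisConnection φ ψ)
    (D : Set C) (hD : ∀ v : V, ψ v ∈ D)
    (Q : Vᵒᵖ ⥤ Type*) (S : Subfunctor Q)
    (v : V) (q : Q.obj (op v)) :
    (∀ c ∈ D, ∀ h : φ c ≤ v, Q.map (homOfLE h).op q ∈ S.obj (op (φ c))) ↔
      Q.map (homOfLE (gc.l_u_le v)).op q ∈ S.obj (op (φ (ψ v))) := by
  constructor
  · intro H
    exact H (ψ v) (hD v) (gc.l_u_le v)
  · intro H c hc h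
    have hcψ : c ≤ ψ v := gc.le_u h
    have hφ : φ c ≤ φ (ψ v) := gc.monotone_l hcψ
    have key : Q.map (homOfLE h).op q =
        Q.map (homOfLE hφ).op (Q.map (homOfLE (gc.l_u_le v)).op q) := by
      rw [← FunctorToTypes.map_comp_apply]
      rfl
    rw [key]
    exact S.map (homOfLE hφ).op H
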